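/- Let S be any feasible capacity installation for the constructed two-color f-SAND instance of cost at most (M+2)·m + 8p, where M > 2m + 8p. Then the support of S contains exactly m edges of cost M, each with exactly one unit of capacity installed; consequently, in any routing associated with S, for each j ∈ [m] the path P_1^j used by k_j as a C_1-terminal and the path P_2^j used by k_j as a C_2-terminal share their first edge (which is the unique cost-M edge incident to k_j in the support). -/

import Mathlib

open scoped Classical
open Finset

namespace FSand

variable {V : Type} [Fintype V] [DecidableEq V]

/-- An edge crosses the cut `(S, Sᶜ)`. -/
def Crossing (S : Finset V) (e : Sym2 V) : Prop :=
  ∃ u v, e = s(u, v) ∧ u ∈ S ∧ v ∉ S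

/-- Total capacity installed on edges crossing the cut `(S, Sᶜ)`. -/
noncomputable def cutCap (x : Sym2 V → ℕ) (S : Finset V) : ℕ :=
  ∑ e ∈ Finset.univ.filter (Crossing S), x e

/-- Feasibility of a capacity installation for the f-SAND instance `(G, r, C)`. -/
def Feasible {ι : Type} (G : SimpleGraph V) (r : V) (C : ι → Finset V)
    (x : Sym2 V → ℕ) : Prop :=
  (∀ e, e ∉ G.edgeSet → x e = 0) ∧
  ∀ S : Finset V, r ∉ S → ∀ i : ι, (C i ∩ S).card ≤ cutCap x S

/-- Cost of a capacity installation. -/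
noncomputable def instCost (w : Sym2 V → ℝ) (x : Sym2 V → ℕ) : ℝ :=
  ∑ e : Sym2 V, w e * (x e : ℝ)

end FSand

namespace SandSat

/-- Vertices of the reduction graph: the root, one node `k_j` per clause, and seven
nodes `y_i^1, …, y_i^7` per variable (indexed here by `Fin 7`, so `y_i^ℓ` has index
`ℓ - 1`). -/
abbrev SandV (m p : ℕ) := Option (Fin m ⊕ (Fin p × Fin 7))

variable {m p : ℕ}

/-- The root. -/
def rt : SandV m p := none
/-- The clause node `k_j`. -/
def kv (j : Fin m) : SandV m p := some (Sum.inl j)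
/-- The variable node `y_i^{ℓ+1}`. -/
def yv (i : Fin p) (ℓ : Fin 7) : SandV m p := some (Sum.inr (i, ℓ))

/-- The SAT formula, given by the clause indices `i1 i, i2 i` of the two positive
occurrences and `i3 i` of the negated occurrence of each variable `x_i`, is
satisfiable. -/
def Satisfiable (i1 i2 i3 : Fin p → Fin m) : Prop :=
  ∃ a : Fin p → Bool, ∀ j : Fin m,
    (∃ i, (i1 i = j ∨ i2 i = j) ∧ a i = true) ∨ (∃ i, i3 i = j ∧ a i = false)

/-- The edges `{r, y_i^1}, {r, y_i^3}, {r, y_i^5}, {r, y_i^7}` (cost 2). -/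
def RootEdge (e : Sym2 (SandV m p)) : Prop :=
  ∃ i, e = s(rt, yv i 0) ∨ e = s(rt, yv i 2) ∨ e = s(rt, yv i 4) ∨ e = s(rt, yv i 6)

/-- The edges `{y_i^ℓ, y_i^{ℓ+1}}`, `ℓ = 1, …, 6` (cost 1). -/
def PathEdge (e : Sym2 (SandV m p)) : Prop :=
  ∃ i, e = s(yv i 0, yv i 1) ∨ e = s(yv i 1, yv i 2) ∨ e = s(yv i 2, yv i 3) ∨
    e = s(yv i 3, yv i 4) ∨ e = s(yv i 4, yv i 5) ∨ e = s(yv i 5, yv i 6)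

/-- The edges `{y_i^2, k_{i_1}}, {y_i^4, k_{i_3}}, {y_i^6, k_{i_2}}` (cost `M`). -/
def CrossEdge (i1 i2 i3 : Fin p → Fin m) (e : Sym2 (SandV m p)) : Prop :=
  ∃ i, e = s(yv i 1, kv (i1 i)) ∨ e = s(yv i 3, kv (i3 i)) ∨ e = s(yv i 5, kv (i2 i))

/-- The reduction graph. -/
def sandG (i1 i2 i3 : Fin p → Fin m) : SimpleGraph (SandV m p) :=
  SimpleGraph.fromEdgeSet
    {e | RootEdge e ∨ PathEdge e ∨ CrossEdge i1 i2 i3 e}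

/-- The edge costs of the reduction graph. -/
noncomputable def sandW (M : ℝ) (i1 i2 i3 : Fin p → Fin m) :
    Sym2 (SandV m p) → ℝ := fun e =>
  if RootEdge e then 2
  else if PathEdge e then 1
  else if CrossEdge i1 i2 i3 e then M
  else 0

/-- The two colors: `C_1` consists of all clause nodes together with the `y_i^1, y_i^5`,
and `C_2` of all clause nodes together with the `y_i^3, y_i^7`. -/
def sandC (q : Fin 2) : Finset (SandV m p) :=
  (Finset.univ.image kv) ∪
    (if q = 0 then
      Finset.univ.image (fun i => yv i 0) ∪ Finset.univ.image (fun i => yv i 4)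
    else
      Finset.univ.image (fun i => yv i 2) ∪ Finset.univ.image (fun i => yv i 6))

/-- Finset of cost-`M` edges. -/
noncomputable def crossE (i1 i2 i3 : Fin p → Fin m) : Finset (Sym2 (SandV m p)) :=
  Finset.univ.filter (CrossEdge i1 i2 i3)

end SandSat

namespace FSand

/-- A routing associated with a capacity installation `x` of a two-color instance:
for each color `q` and each terminal `v` of color `q`, a path from `v` to the root, such
that every edge lies on at most `x e` paths of each color. -/
structure AssocRouting {V : Type} [Fintype V] [DecidableEq V]
    (G : SimpleGraph V) (r : V) (C : Fin 2 → Finset V) (x : Sym2 V → ℕ) where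
  P : (q : Fin 2) → (v : V) → v ∈ C q → G.Walk v r
  isPath : ∀ q v hv, (P q v hv).IsPath
  cap : ∀ q e, ((C q).attach.filter (fun v => e ∈ (P q v.1 v.2).edges)).card ≤ x e

end FSand


namespace SandSat

variable {m p : ℕ} {i1 i2 i3 : Fin p → Fin m}

lemma not_rootEdge_of_kv_mem {e : Sym2 (SandV m p)} (j : Fin m) (hj : kv j ∈ e) :
    ¬ RootEdge e := by
  rintro ⟨i, h | h | h | h⟩ <;> subst h <;>
    simp [Sym2.mem_iff, kv, rt, yv] at hj

lemma not_pathEdge_of_kv_mem {e : Sym2 (SandV m p)} (j : Fin m) (hj : kv j ∈ e) :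
    ¬ PathEdge e := by
  rintro ⟨i, h | h | h | h | h | h⟩ <;> subst h <;>
    simp [Sym2.mem_iff, kv, yv] at hj

lemma crossEdge_exists_kv {e : Sym2 (SandV m p)} (h : CrossEdge i1 i2 i3 e) :
    ∃ j, kv j ∈ e := by
  obtain ⟨i, h | h | h⟩ := h <;> subst h <;> exact ⟨_, Sym2.mem_mk_right _ _⟩

lemma crossEdge_kv_unique {e : Sym2 (SandV m p)} (h : CrossEdge i1 i2 i3 e)
    {j j' : Fin m} (hj : kv j ∈ e) (hj' : kv j' ∈ e) : j = j' := by
  obtain ⟨i, h | h | h⟩ := h <;> subst h <;>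
    simp [Sym2.mem_iff, kv, yv] at hj hj' <;> rw [hj, hj']

end SandSat

open FSand SandSat in
/-- any feasible installation of cost at most `(M+2)·m + 8p` has exactly `m`
cost-`M` edges in its support, each with one unit of capacity, and in any associated
routing the two paths of each clause node `k_j` share their first edge, which is a
cost-`M` edge of the support incident to `k_j`. -/
theorem stmt_8 {m p : ℕ} (i1 i2 i3 : Fin p → Fin m)
    (hocc : ∀ i, i1 i ≠ i2 i ∧ i1 i ≠ i3 i ∧ i2 i ≠ i3 i)
    (M : ℝ) (hM : 2 * (m : ℝ) + 8 * p < M)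
    (x : Sym2 (SandV m p) → ℕ)
    (hfeas : Feasible (sandG i1 i2 i3) rt sandC x)
    (hcost : instCost (sandW M i1 i2 i3) x ≤ (M + 2) * m + 8 * p) :
    ((crossE i1 i2 i3).filter (fun e => x e ≠ 0)).card = m ∧
    (∀ e ∈ crossE i1 i2 i3, x e ≤ 1) ∧
    ∀ R : AssocRouting (sandG i1 i2 i3) rt sandC x,
      ∀ (j : Fin m) (h0 : kv j ∈ (sandC 0 : Finset (SandV m p)))
        (h1 : kv j ∈ (sandC 1 : Finset (SandV m p))),
        ∃ e, CrossEdge i1 i2 i3 e ∧ (kv j) ∈ e ∧ x e = 1 ∧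
          (R.P 0 (kv j) h0).edges.head? = some e ∧
          (R.P 1 (kv j) h1).edges.head? = some e := by
  classical
  obtain ⟨hx0, hcut⟩ := hfeas
  have hM0 : (0:ℝ) < M := lt_of_le_of_lt (by positivity) hM
  set F : Fin m → Finset (Sym2 (SandV m p)) :=
    fun j => (crossE i1 i2 i3).filter (fun e => kv j ∈ e) with hF
  have hkvC : ∀ (q : Fin 2) (j : Fin m), kv j ∈ (sandC q : Finset (SandV m p)) := by
    intro q j
    exact Finset.mem_union_left _ (Finset.mem_image.2 ⟨j, Finset.mem_univ _, rfl⟩)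
  have hmemF : ∀ (j : Fin m) (e : Sym2 (SandV m p)), kv j ∈ e → x e ≠ 0 → e ∈ F j := by
    intro j e hje hxe
    have heG : e ∈ (sandG i1 i2 i3).edgeSet := by
      by_contra h; exact hxe (hx0 e h)
    rw [sandG, SimpleGraph.edgeSet_fromEdgeSet] at heG
    obtain ⟨hmem, -⟩ := heG
    rcases hmem with h | h | h
    · exact absurd h (not_rootEdge_of_kv_mem j hje)
    · exact absurd h (not_pathEdge_of_kv_mem j hje)
    · exact Finset.mem_filter.2 ⟨Finset.mem_filter.2 ⟨Finset.mem_univ _, h⟩, hje⟩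
  have hper : ∀ j : Fin m, 1 ≤ ∑ e ∈ F j, x e := by
    intro j
    have hS : ((sandC 0 : Finset (SandV m p)) ∩ {kv j}).card = 1 := by
      rw [Finset.inter_singleton_of_mem (hkvC 0 j), Finset.card_singleton]
    have h1 : 1 ≤ cutCap x {kv j} := by
      have := hcut {kv j} (by simp [rt, kv]) 0
      rwa [hS] at this
    refine le_trans h1 (Finset.sum_le_sum_of_ne_zero ?_)
    intro e he hxe
    have hcr : Crossing ({kv j} : Finset (SandV m p)) e := (Finset.mem_filter.1 he).2
    obtain ⟨u, v, rfl, hu, hv⟩ := hcr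
    rw [Finset.mem_singleton] at hu
    subst hu
    exact hmemF j _ (Sym2.mem_mk_left _ _) hxe
  have hcover : crossE i1 i2 i3 = Finset.univ.biUnion F := by
    ext e
    constructor
    · intro he
      obtain ⟨j, hj⟩ := crossEdge_exists_kv ((Finset.mem_filter.1 he).2)
      exact Finset.mem_biUnion.2 ⟨j, Finset.mem_univ _, Finset.mem_filter.2 ⟨he, hj⟩⟩
    · intro he
      obtain ⟨j, -, hj⟩ := Finset.mem_biUnion.1 he
      exact (Finset.mem_filter.1 hj).1
  have hdisj : ((Finset.univ : Finset (Fin m)) : Set (Fin m)).PairwiseDisjoint F := by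
    intro a _ b _ hab
    simp only [Function.onFun, Finset.disjoint_left, hF]
    intro e hea heb
    rw [Finset.mem_filter] at hea heb
    have hce : CrossEdge i1 i2 i3 e := (Finset.mem_filter.1 hea.1).2
    exact hab (crossEdge_kv_unique hce hea.2 heb.2)
  have hsum : ∑ j, ∑ e ∈ F j, x e = ∑ e ∈ crossE i1 i2 i3, x e := by
    rw [hcover, Finset.sum_biUnion hdisj]
  have hTm : (m : ℕ) ≤ ∑ e ∈ crossE i1 i2 i3, x e := by
    calc (m:ℕ) = ∑ _j : Fin m, 1 := by simp
    _ ≤ ∑ j, ∑ e ∈ F j, x e := Finset.sum_le_sum (fun j _ => hper j)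
    _ = _ := hsum
  have hwnn : ∀ e, 0 ≤ sandW M i1 i2 i3 e := by
    intro e; unfold sandW; split_ifs <;> norm_num
    exact hM0.le
  have hwM : ∀ e ∈ crossE i1 i2 i3, sandW M i1 i2 i3 e = M := by
    intro e he
    have hce : CrossEdge i1 i2 i3 e := (Finset.mem_filter.1 he).2
    obtain ⟨j, hj⟩ := crossEdge_exists_kv hce
    unfold sandW
    rw [if_neg (not_rootEdge_of_kv_mem j hj), if_neg (not_pathEdge_of_kv_mem j hj),
      if_pos hce]
  have hMx : M * ((∑ e ∈ crossE i1 i2 i3, x e : ℕ) : ℝ) ≤ instCost (sandW M i1 i2 i3) x := by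
    rw [instCost]
    calc M * ((∑ e ∈ crossE i1 i2 i3, x e : ℕ) : ℝ)
        = ∑ e ∈ crossE i1 i2 i3, sandW M i1 i2 i3 e * (x e : ℝ) := by
          push_cast
          rw [Finset.mul_sum]
          exact Finset.sum_congr rfl (fun e he => by rw [hwM e he])
    _ ≤ _ := Finset.sum_le_sum_of_subset_of_nonneg (Finset.subset_univ _)
          (fun e _ _ => mul_nonneg (hwnn e) (Nat.cast_nonneg _))
  have hTle : ∑ e ∈ crossE i1 i2 i3, x e ≤ m := by
    by_contra h
    push_neg at h
    have h' : (m : ℝ) + 1 ≤ ((∑ e ∈ crossE i1 i2 i3, x e : ℕ) : ℝ) := by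
      exact_mod_cast h
    nlinarith [hMx, hcost, hM, mul_le_mul_of_nonneg_left h' hM0.le]
  have hT : ∑ e ∈ crossE i1 i2 i3, x e = m := le_antisymm hTle hTm
  have hsum' : ∑ j, ∑ e ∈ F j, x e = m := by rw [hsum, hT]
  have hs1 : ∀ j : Fin m, ∑ e ∈ F j, x e = 1 := by
    intro j
    have h1 := hper j
    have h2 : ∑ j' ∈ Finset.univ.erase j, ∑ e ∈ F j', x e + ∑ e ∈ F j, x e = m := by
      rw [Finset.sum_erase_add _ _ (Finset.mem_univ j)]; exact hsum'
    have h3 : (m - 1 : ℕ) ≤ ∑ j' ∈ Finset.univ.erase j, ∑ e ∈ F j', x e := by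
      calc (m - 1 : ℕ) = (Finset.univ.erase j).card := by
            rw [Finset.card_erase_of_mem (Finset.mem_univ j), Finset.card_univ,
              Fintype.card_fin]
      _ = ∑ _j' ∈ Finset.univ.erase j, 1 := by
            rw [Finset.sum_const, smul_eq_mul, mul_one]
      _ ≤ _ := Finset.sum_le_sum (fun j' _ => hper j')
    have hm1 : 0 < m := j.pos
    omega
  have hxle : ∀ e ∈ crossE i1 i2 i3, x e ≤ 1 := by
    intro e he
    have hce : CrossEdge i1 i2 i3 e := (Finset.mem_filter.1 he).2
    obtain ⟨j, hj⟩ := crossEdge_exists_kv hce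
    have heF : e ∈ F j := Finset.mem_filter.2 ⟨he, hj⟩
    calc x e ≤ ∑ e' ∈ F j, x e' := Finset.single_le_sum (fun _ _ => Nat.zero_le _) heF
    _ = 1 := hs1 j
  have hcard1 : ∀ j : Fin m, ((F j).filter (fun e => x e ≠ 0)).card = 1 := by
    intro j
    have hle : ((F j).filter (fun e => x e ≠ 0)).card ≤ 1 := by
      calc ((F j).filter (fun e => x e ≠ 0)).card
          = ∑ _e ∈ (F j).filter (fun e => x e ≠ 0), 1 := by
            rw [Finset.sum_const, smul_eq_mul, mul_one]
      _ ≤ ∑ e ∈ (F j).filter (fun e => x e ≠ 0), x e :=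
            Finset.sum_le_sum
              (fun e he => Nat.one_le_iff_ne_zero.2 (Finset.mem_filter.1 he).2)
      _ ≤ ∑ e ∈ F j, x e := Finset.sum_le_sum_of_subset (Finset.filter_subset _ _)
      _ = 1 := hs1 j
    have hpos : 0 < ((F j).filter (fun e => x e ≠ 0)).card := by
      rw [Finset.card_pos]
      by_contra h
      rw [Finset.not_nonempty_iff_eq_empty, Finset.filter_eq_empty_iff] at h
      push_neg at h
      have h0 : ∑ e ∈ F j, x e = 0 := Finset.sum_eq_zero (fun e he => h he)
      rw [hs1 j] at h0
      exact one_ne_zero h0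
    omega
  have hsuppcard : ((crossE i1 i2 i3).filter (fun e => x e ≠ 0)).card = m := by
    have hrw : (crossE i1 i2 i3).filter (fun e => x e ≠ 0)
        = Finset.univ.biUnion (fun j => (F j).filter (fun e => x e ≠ 0)) := by
      rw [hcover, Finset.filter_biUnion]
    rw [hrw, Finset.card_biUnion (fun a _ b _ hab =>
      Finset.disjoint_filter_filter (hdisj (Finset.mem_coe.2 (Finset.mem_univ a))
        (Finset.mem_coe.2 (Finset.mem_univ b)) hab))]
    simp [hcard1]
  refine ⟨hsuppcard, hxle, ?_⟩
  intro R j h0 h1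
  have hfirst : ∀ (q : Fin 2) (hq : kv j ∈ (sandC q : Finset (SandV m p))),
      ∃ e, e ∈ F j ∧ 1 ≤ x e ∧ (R.P q (kv j) hq).edges.head? = some e := by
    intro q hq
    have hnn : ¬ (R.P q (kv j) hq).Nil :=
      SimpleGraph.Walk.not_nil_of_ne (by simp [kv, rt])
    obtain ⟨u, hadj, w, hw⟩ := SimpleGraph.Walk.not_nil_iff.1 hnn
    refine ⟨s(kv j, u), ?_, ?_, ?_⟩
    · rw [sandG, SimpleGraph.fromEdgeSet_adj] at hadj
      obtain ⟨hmem, hne⟩ := hadj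
      have hkm : kv j ∈ s(kv j, u) := Sym2.mem_mk_left _ _
      rcases hmem with h | h | h
      · exact absurd h (not_rootEdge_of_kv_mem j hkm)
      · exact absurd h (not_pathEdge_of_kv_mem j hkm)
      · exact Finset.mem_filter.2 ⟨Finset.mem_filter.2 ⟨Finset.mem_univ _, h⟩, hkm⟩
    · have hmm : (⟨kv j, hq⟩ : {v // v ∈ (sandC q : Finset (SandV m p))}) ∈
          (sandC q : Finset (SandV m p)).attach.filter
            (fun v => s(kv j, u) ∈ (R.P q v.1 v.2).edges) := by
        refine Finset.mem_filter.2 ⟨Finset.mem_attach _ _, ?_⟩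
        show s(kv j, u) ∈ (R.P q (kv j) hq).edges
        rw [hw, SimpleGraph.Walk.edges_cons]
        exact List.mem_cons_self
      have hcap := R.cap q s(kv j, u)
      have hc : 0 < ((sandC q : Finset (SandV m p)).attach.filter
          (fun v => s(kv j, u) ∈ (R.P q v.1 v.2).edges)).card :=
        Finset.card_pos.2 ⟨_, hmm⟩
      omega
    · rw [hw, SimpleGraph.Walk.edges_cons]; rfl
  obtain ⟨e0, he0F, he0x, he0h⟩ := hfirst 0 h0
  obtain ⟨e1, he1F, he1x, he1h⟩ := hfirst 1 h1
  have huniq : e1 = e0 := by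
    by_contra hab
    have hsub : ({e1, e0} : Finset (Sym2 (SandV m p))) ⊆ F j := by
      intro e he; rw [Finset.mem_insert, Finset.mem_singleton] at he
      rcases he with rfl | rfl
      exacts [he1F, he0F]
    have hle : x e1 + x e0 ≤ ∑ e ∈ F j, x e := by
      rw [← Finset.sum_pair hab]
      exact Finset.sum_le_sum_of_subset hsub
    rw [hs1 j] at hle
    omega
  have hce0 : CrossEdge i1 i2 i3 e0 := (Finset.mem_filter.1 (Finset.mem_filter.1 he0F).1).2
  refine ⟨e0, hce0, (Finset.mem_filter.1 he0F).2,
    le_antisymm (hxle e0 (Finset.mem_filter.1 he0F).1) he0x, he0h, ?_⟩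
  rw [huniq] at he1h
  exact he1h
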